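/- Suppose (a₁,b₁,T₁) and (a₂,b₂,T₂) are 4-chained, and write G_j = G_{a_j,b_j,T_j} for j = 1,2. Then for every integer k ≥ 1 the interval [s_{8k−3}(b₂,T₂) + (π/6)·T₂·b₂^{8k−3}, s_{8k−2}(b₂,T₂) − (π/6)·T₂·b₂^{8k−3}] is nonempty, and for every χ in this interval one has G₁(χ) ≤ −(1/2)·a₂·T₂·b₂^{8k−3} and G₂(χ) ≤ −(1/2)·a₂·T₂·b₂^{8k−3}. -/

import Mathlib

open Real Filter Set

/-- Breakpoints `s_n(b,T) = T·π·(b^n − 1)/(b − 1)`. -/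
noncomputable def brk (b T : ℝ) (n : ℕ) : ℝ := T * Real.pi * (b ^ n - 1) / (b - 1)

/-- Index of the segment containing `x ≥ 0`: the unique `m` with `s_m ≤ x < s_{m+1}`
(for `b > 1`, `T > 0`). -/
noncomputable def seg (b T x : ℝ) : ℕ := sInf {n : ℕ | x < brk b T (n + 1)}

/-- The saturated Nussbaum function `N_{a,b,T}`: on `[s_{n−1}, s_n)` (with `m = n − 1`)
it equals `(−1)^m·a·cos((χ − s_m)/(b^m·T))`, extended evenly to `χ < 0`. -/
noncomputable def satN (a b T : ℝ) (χ : ℝ) : ℝ :=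
  (-1 : ℝ) ^ (seg b T |χ|) * a *
    Real.cos ((|χ| - brk b T (seg b T |χ|)) / (b ^ (seg b T |χ|) * T))

/-- The integrated function `G_{a,b,T}(χ) = ∫_0^χ N_{a,b,T}(τ) dτ`. -/
noncomputable def satG (a b T : ℝ) (χ : ℝ) : ℝ := ∫ τ in (0:ℝ)..χ, satN a b T τ

/-- Two triples `(a₁,b₁,T₁)`, `(a₂,b₂,T₂)` are 4-chained. -/
def Chained4 (a₁ b₁ T₁ a₂ b₂ T₂ : ℝ) : Prop :=
  0 < a₂ ∧ 1 < b₂ ∧ 0 < T₂ ∧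
    b₁ = b₂ ^ 4 ∧ a₁ = (b₂ ^ 3 / (1 + b₂ + b₂ ^ 2 + b₂ ^ 3)) * a₂ ∧
    T₁ = (1 + b₂ + b₂ ^ 2 + b₂ ^ 3) * T₂

-- lemmas
lemma brk_zero (b T : ℝ) : brk b T 0 = 0 := by simp [brk]

lemma brk_succ {b : ℝ} (hb : 1 < b) (T : ℝ) (n : ℕ) :
    brk b T (n + 1) = brk b T n + Real.pi * T * b ^ n := by
  have h : b - 1 ≠ 0 := by linarith
  simp only [brk]
  rw [div_add' _ _ _ h]
  congr 1
  ring

lemma brk_lt_succ {b T : ℝ} (hb : 1 < b) (hT : 0 < T) (n : ℕ) :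
    brk b T n < brk b T (n + 1) := by
  rw [brk_succ hb]
  have : 0 < Real.pi * T * b ^ n := by positivity
  linarith

lemma brk_mono {b T : ℝ} (hb : 1 < b) (hT : 0 < T) : StrictMono (brk b T) :=
  strictMono_nat_of_lt_succ (brk_lt_succ hb hT)

lemma brk_nonneg {b T : ℝ} (hb : 1 < b) (hT : 0 < T) (n : ℕ) : 0 ≤ brk b T n := by
  have := (brk_mono hb hT).monotone (Nat.zero_le n)
  rw [brk_zero] at this
  exact this

lemma seg_eq {b T : ℝ} (hb : 1 < b) (hT : 0 < T) {m : ℕ} {x : ℝ}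
    (h1 : brk b T m ≤ x) (h2 : x < brk b T (m + 1)) : seg b T x = m := by
  have hmem : m ∈ {n : ℕ | x < brk b T (n + 1)} := h2
  have hne : Set.Nonempty {n : ℕ | x < brk b T (n + 1)} := ⟨m, hmem⟩
  have hle : seg b T x ≤ m := Nat.sInf_le hmem
  rcases lt_or_eq_of_le hle with hlt | heq
  · exfalso
    have hmem' : seg b T x ∈ {n : ℕ | x < brk b T (n + 1)} := Nat.sInf_mem hne
    have : brk b T (seg b T x + 1) ≤ brk b T m := (brk_mono hb hT).monotone hlt
    exact absurd (lt_of_lt_of_le hmem' this) (not_lt.2 h1)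
  · exact heq

lemma satN_eqOn {a b T : ℝ} (hb : 1 < b) (hT : 0 < T) (m : ℕ) :
    ∀ x ∈ Set.Icc (brk b T m) (brk b T (m + 1)),
      satN a b T x = (-1 : ℝ) ^ m * a * Real.cos ((x - brk b T m) / (b ^ m * T)) := by
  rintro x ⟨h1, h2⟩
  have hx0 : 0 ≤ x := le_trans (brk_nonneg hb hT m) h1
  rcases lt_or_eq_of_le h2 with hlt | heq
  · have hseg : seg b T |x| = m := by
      rw [abs_of_nonneg hx0]; exact seg_eq hb hT h1 hlt
    rw [satN, hseg, abs_of_nonneg hx0]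
  · have hseg : seg b T |x| = m + 1 := by
      rw [abs_of_nonneg hx0, heq]
      exact seg_eq hb hT le_rfl (brk_lt_succ hb hT (m + 1))
    rw [satN, hseg, abs_of_nonneg hx0, heq, sub_self, zero_div, Real.cos_zero, mul_one]
    have harg : (brk b T (m + 1) - brk b T m) / (b ^ m * T) = Real.pi := by
      rw [brk_succ hb]
      have hbT : b ^ m * T ≠ 0 := by positivity
      field_simp
      ring
    rw [harg, Real.cos_pi, pow_succ]
    ring

open MeasureTheory intervalIntegral in
lemma satN_intervalIntegrable {a b T : ℝ} (hb : 1 < b) (hT : 0 < T) (m : ℕ) {x y : ℝ}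
    (hx : x ∈ Set.Icc (brk b T m) (brk b T (m + 1)))
    (hy : y ∈ Set.Icc (brk b T m) (brk b T (m + 1))) :
    IntervalIntegrable (satN a b T) MeasureTheory.volume x y := by
  set g : ℝ → ℝ := fun τ => (-1 : ℝ) ^ m * a * Real.cos ((τ - brk b T m) / (b ^ m * T)) with hg
  have hgc : Continuous g := by
    apply Continuous.mul continuous_const
    exact Real.continuous_cos.comp ((continuous_id.sub continuous_const).div_const _)
  have hgi : IntervalIntegrable g MeasureTheory.volume x y := hgc.intervalIntegrable x y
  rw [intervalIntegrable_iff] at hgi ⊢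
  apply hgi.congr_fun _ measurableSet_uIoc
  intro τ hτ
  have hsub : Set.uIoc x y ⊆ Set.Icc (brk b T m) (brk b T (m + 1)) :=
    Set.uIoc_subset_uIcc.trans (Set.ordConnected_Icc.uIcc_subset hx hy)
  exact (satN_eqOn hb hT m τ (hsub hτ)).symm

open MeasureTheory intervalIntegral in
lemma satN_integral_seg {a b T : ℝ} (hb : 1 < b) (hT : 0 < T) (m : ℕ) {x : ℝ}
    (hx : x ∈ Set.Icc (brk b T m) (brk b T (m + 1))) :
    ∫ τ in (brk b T m)..x, satN a b T τ
      = (-1 : ℝ) ^ m * a * (b ^ m * T) * Real.sin ((x - brk b T m) / (b ^ m * T)) := by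
  have hd : (b ^ m * T) ≠ 0 := by positivity
  have hcongr : ∫ τ in (brk b T m)..x, satN a b T τ
      = ∫ τ in (brk b T m)..x, (-1 : ℝ) ^ m * a * Real.cos ((τ - brk b T m) / (b ^ m * T)) := by
    apply intervalIntegral.integral_congr
    intro τ hτ
    have hsub : Set.uIcc (brk b T m) x ⊆ Set.Icc (brk b T m) (brk b T (m + 1)) :=
      Set.ordConnected_Icc.uIcc_subset ⟨le_rfl, (brk_lt_succ hb hT m).le⟩ hx
    exact satN_eqOn hb hT m τ (hsub hτ)
  rw [hcongr, intervalIntegral.integral_const_mul]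
  have h1 : ∫ τ in (brk b T m)..x, Real.cos ((τ - brk b T m) / (b ^ m * T))
      = (b ^ m * T) * Real.sin ((x - brk b T m) / (b ^ m * T)) := by
    have h2 : (fun τ => Real.cos ((τ - brk b T m) / (b ^ m * T)))
        = fun τ => (fun s => Real.cos (s / (b ^ m * T))) (τ - brk b T m) := rfl
    rw [h2, intervalIntegral.integral_comp_sub_right (fun s => Real.cos (s / (b ^ m * T))) (brk b T m),
      intervalIntegral.integral_comp_div _ hd, integral_cos, sub_self, zero_div, Real.sin_zero,
      sub_zero, smul_eq_mul]
  rw [h1]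
  ring

lemma satN_integrable_zero {a b T : ℝ} (hb : 1 < b) (hT : 0 < T) (m : ℕ) :
    IntervalIntegrable (satN a b T) MeasureTheory.volume 0 (brk b T m) := by
  induction m with
  | zero => rw [brk_zero]
  | succ n ih =>
      exact ih.trans (satN_intervalIntegrable hb hT n
        ⟨le_rfl, (brk_lt_succ hb hT n).le⟩ ⟨(brk_lt_succ hb hT n).le, le_rfl⟩)

lemma satG_brk {a b T : ℝ} (hb : 1 < b) (hT : 0 < T) (m : ℕ) :
    satG a b T (brk b T m) = 0 := by
  induction m with
  | zero => rw [brk_zero, satG, intervalIntegral.integral_same]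
  | succ n ih =>
      have hsplit := intervalIntegral.integral_add_adjacent_intervals
        (satN_integrable_zero hb hT n (a := a))
        (satN_intervalIntegrable hb hT n (a := a)
          ⟨le_rfl, (brk_lt_succ hb hT n).le⟩ ⟨(brk_lt_succ hb hT n).le, le_rfl⟩)
      have hval := satN_integral_seg (a := a) hb hT n
        (x := brk b T (n + 1)) ⟨(brk_lt_succ hb hT n).le, le_rfl⟩
      have harg : (brk b T (n + 1) - brk b T n) / (b ^ n * T) = Real.pi := by
        rw [brk_succ hb]
        have hbT : b ^ n * T ≠ 0 := by positivity
        field_simp; ring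
      rw [harg, Real.sin_pi, mul_zero] at hval
      rw [satG] at ih ⊢
      rw [← hsplit, ih, hval, add_zero]

lemma satG_formula {a b T : ℝ} (hb : 1 < b) (hT : 0 < T) (m : ℕ) {x : ℝ}
    (hx : x ∈ Set.Icc (brk b T m) (brk b T (m + 1))) :
    satG a b T x = (-1 : ℝ) ^ m * a * (b ^ m * T) * Real.sin ((x - brk b T m) / (b ^ m * T)) := by
  have hsplit := intervalIntegral.integral_add_adjacent_intervals
    (satN_integrable_zero hb hT m (a := a))
    (satN_intervalIntegrable hb hT m (a := a) ⟨le_rfl, (brk_lt_succ hb hT m).le⟩ hx)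
  have h0 := satG_brk (a := a) hb hT m
  rw [satG] at h0 ⊢
  rw [← hsplit, h0, zero_add, satN_integral_seg hb hT m hx]

lemma sin_ge_left {t θ : ℝ} (h0 : 0 ≤ t) (h1 : t ≤ θ) (h2 : θ ≤ Real.pi - t) :
    Real.sin t ≤ Real.sin θ := by
  have hπ := Real.pi_pos
  have htp : t ≤ Real.pi / 2 := by linarith
  rcases le_or_gt θ (Real.pi / 2) with hθ | hθ
  · exact Real.strictMonoOn_sin.monotoneOn ⟨by linarith, htp⟩ ⟨by linarith, hθ⟩ h1
  · rw [← Real.sin_pi_sub θ]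
    exact Real.strictMonoOn_sin.monotoneOn ⟨by linarith, htp⟩ ⟨by linarith, by linarith⟩
      (by linarith)

lemma key_ineq {b : ℝ} (hb : 1 < b) :
    1 / (2 * b ^ 2) ≤ Real.sin (Real.pi * (6 + b) / (6 * (1 + b + b ^ 2 + b ^ 3))) := by
  have hb0 : 0 < b := lt_trans one_pos hb
  have hS : 0 < 1 + b + b ^ 2 + b ^ 3 := by positivity
  have hπl : (3141592 / 1000000 : ℝ) ≤ Real.pi := by
    have := Real.pi_gt_d6; norm_num at this ⊢; linarith
  have hπu : Real.pi ≤ (31416 / 10000 : ℝ) := by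
    have := Real.pi_lt_d6; norm_num at this ⊢; linarith
  have hπ0 := Real.pi_pos
  set S := 1 + b + b ^ 2 + b ^ 3 with hSdef
  set t := Real.pi * (6 + b) / (6 * S) with htdef
  clear_value S t
  have ht0 : 0 < t := by
    rw [htdef]
    exact div_pos (by nlinarith) (by nlinarith)
  have ht1 : t ≤ 1 := by
    rw [htdef, div_le_one (by nlinarith)]
    nlinarith [sq_nonneg (b - 1), pow_pos hb0 3]
  have hsin := Real.sin_gt_sub_cube ht0
  have hcert : 0 ≤ 288 * (3141592 / 1000000 : ℝ) * b ^ 2 * (6 + b) * S ^ 2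
      - 2 * (31416 / 10000 : ℝ) ^ 3 * b ^ 2 * (6 + b) ^ 3 - 864 * S ^ 3 := by
    have hexp : 288 * (3141592 / 1000000 : ℝ) * b ^ 2 * (6 + b) * S ^ 2
        - 2 * (31416 / 10000 : ℝ) ^ 3 * b ^ 2 * (6 + b) ^ 3 - 864 * S ^ 3
        = (24188219268831/976562500) + (215491791367161/976562500)*(b-1)
          + (308819647594593/488281250)*(b-1)^2 + (92318899879323/97656250)*(b-1)^3
          + (849146514143391/976562500)*(b-1)^4 + (510798682441017/976562500)*(b-1)^5
          + (635933268/3125)*(b-1)^6 + (146954772/3125)*(b-1)^7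
          + (78331788/15625)*(b-1)^8 + (637164/15625)*(b-1)^9 := by
      rw [hSdef]; ring
    rw [hexp]
    have hb1 : (0:ℝ) ≤ b - 1 := by linarith
    positivity
  have hX : (0:ℝ) ≤ b ^ 2 * (6 + b) * S ^ 2 := by positivity
  have hY : (0:ℝ) ≤ b ^ 2 * (6 + b) ^ 3 := by positivity
  have hπ3 : Real.pi ^ 3 ≤ (31416 / 10000 : ℝ) ^ 3 := by
    exact pow_le_pow_left₀ hπ0.le hπu 3
  have hA : 0 ≤ b ^ 2 * (6 + b) * S ^ 2 * (Real.pi - 3141592 / 1000000) :=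
    mul_nonneg hX (by linarith)
  have hB : 0 ≤ b ^ 2 * (6 + b) ^ 3 * ((31416 / 10000 : ℝ) ^ 3 - Real.pi ^ 3) :=
    mul_nonneg hY (by linarith)
  have hnum : 0 ≤ 288 * Real.pi * b ^ 2 * (6 + b) * S ^ 2
      - 2 * Real.pi ^ 3 * b ^ 2 * (6 + b) ^ 3 - 864 * S ^ 3 := by linarith [hcert, hA, hB]
  have hid : t - t ^ 3 / 4 - 1 / (2 * b ^ 2)
      = (288 * Real.pi * b ^ 2 * (6 + b) * S ^ 2 - 2 * Real.pi ^ 3 * b ^ 2 * (6 + b) ^ 3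
          - 864 * S ^ 3) / (1728 * S ^ 3 * b ^ 2) := by
    rw [htdef]
    field_simp
    ring
  have hfrac : 0 ≤ t - t ^ 3 / 4 - 1 / (2 * b ^ 2) := by
    rw [hid]
    apply div_nonneg hnum (by positivity)
  linarith [pow_pos ht0 3]

lemma brk_chained {b : ℝ} (hb : 1 < b) (T : ℝ) (n : ℕ) :
    brk (b ^ 4) ((1 + b + b ^ 2 + b ^ 3) * T) n = brk b T (4 * n) := by
  have hb0 : 0 < b := lt_trans one_pos hb
  have h1 : b - 1 ≠ 0 := by intro h; nlinarith
  have h2 : b ^ 4 - 1 ≠ 0 := by nlinarith [pow_lt_pow_right₀ hb (show 0 < 4 by norm_num)]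
  rw [brk, brk, pow_mul]
  rw [div_eq_div_iff h2 h1]
  ring


set_option maxHeartbeats 2000000 in
/-- on a common interval inside the `(8k−2)`-th fast segment, both
`G₁` and `G₂` are below `−(1/2)·a₂·T₂·b₂^{8k−3}`. -/
theorem chained_common_negative_interval (a₁ b₁ T₁ a₂ b₂ T₂ : ℝ)
    (h : Chained4 a₁ b₁ T₁ a₂ b₂ T₂) (k : ℕ) (hk : 1 ≤ k) :
    brk b₂ T₂ (8 * k - 3) + (Real.pi / 6) * T₂ * b₂ ^ (8 * k - 3) ≤
      brk b₂ T₂ (8 * k - 2) - (Real.pi / 6) * T₂ * b₂ ^ (8 * k - 3) ∧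
    ∀ χ ∈ Set.Icc (brk b₂ T₂ (8 * k - 3) + (Real.pi / 6) * T₂ * b₂ ^ (8 * k - 3))
        (brk b₂ T₂ (8 * k - 2) - (Real.pi / 6) * T₂ * b₂ ^ (8 * k - 3)),
      satG a₁ b₁ T₁ χ ≤ -(1 / 2) * (a₂ * T₂ * b₂ ^ (8 * k - 3)) ∧
      satG a₂ b₂ T₂ χ ≤ -(1 / 2) * (a₂ * T₂ * b₂ ^ (8 * k - 3)) := by
  unfold Chained4 at h
  obtain ⟨ha₂, hb₂, hT₂, hb₁, ha₁, hT₁⟩ := h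
  have hb₂0 : 0 < b₂ := lt_trans one_pos hb₂
  have hπ := Real.pi_pos
  have hn1 : 8 * k - 2 = (8 * k - 3) + 1 := by omega
  rw [hn1]
  set n := 8 * k - 3 with hn
  have hlen : brk b₂ T₂ (n + 1) = brk b₂ T₂ n + Real.pi * T₂ * b₂ ^ n := brk_succ hb₂ T₂ n
  have hεpos : 0 < Real.pi / 6 * T₂ * b₂ ^ n := by positivity
  have hgap : Real.pi / 6 * T₂ * b₂ ^ n + Real.pi / 6 * T₂ * b₂ ^ n ≤ Real.pi * T₂ * b₂ ^ n := by
    nlinarith [pow_pos hb₂0 n]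
  refine ⟨by linarith, ?_⟩
  rintro χ ⟨hχl, hχr⟩
  have hSpos : 0 < 1 + b₂ + b₂ ^ 2 + b₂ ^ 3 := by positivity
  constructor
  · -- system 1
    have hb₁gt : 1 < b₁ := by
      rw [hb₁]; exact one_lt_pow₀ hb₂ (by norm_num)
    have hT₁pos : 0 < T₁ := by rw [hT₁]; exact mul_pos hSpos hT₂
    set m := 2 * k - 1 with hm
    have hbrk1 : ∀ j, brk b₁ T₁ j = brk b₂ T₂ (4 * j) := by
      intro j; rw [hb₁, hT₁]; exact brk_chained hb₂ T₂ j
    have h4m : 4 * m = 8 * k - 4 := by omega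
    have h4m1 : 4 * (m + 1) = 8 * k := by omega
    have hstep : brk b₂ T₂ n = brk b₂ T₂ (8 * k - 4) + Real.pi * T₂ * b₂ ^ (8 * k - 4) := by
      have := brk_succ hb₂ T₂ (8 * k - 4)
      rwa [show (8 * k - 4) + 1 = n by omega] at this
    have hmono := brk_mono hb₂ hT₂
    have hmem1 : χ ∈ Set.Icc (brk b₁ T₁ m) (brk b₁ T₁ (m + 1)) := by
      rw [hbrk1, hbrk1, h4m, h4m1]
      constructor
      · have h1 : brk b₂ T₂ (8 * k - 4) ≤ brk b₂ T₂ n := hmono.monotone (by omega)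
        linarith
      · have h2 : brk b₂ T₂ (n + 1) ≤ brk b₂ T₂ (8 * k) := hmono.monotone (by omega)
        linarith
    have hform1 := satG_formula (a := a₁) hb₁gt hT₁pos m hmem1
    have hodd_m : Odd m := ⟨k - 1, by omega⟩
    rw [hodd_m.neg_one_pow] at hform1
    have hamp : a₁ * (b₁ ^ m * T₁) = a₂ * T₂ * b₂ ^ (8 * k - 1) := by
      rw [ha₁, hb₁, hT₁, ← pow_mul, h4m]
      have hpow : b₂ ^ (8 * k - 1) = b₂ ^ 3 * b₂ ^ (8 * k - 4) := by
        rw [← pow_add]; congr 1; omega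
      field_simp
      rw [hpow]
    have hθden : (0:ℝ) < b₂ ^ (8 * k - 4) * ((1 + b₂ + b₂ ^ 2 + b₂ ^ 3) * T₂) := by positivity
    have hθ₁def : (χ - brk b₁ T₁ m) / (b₁ ^ m * T₁)
        = (χ - brk b₂ T₂ (8 * k - 4)) / (b₂ ^ (8 * k - 4) * ((1 + b₂ + b₂ ^ 2 + b₂ ^ 3) * T₂)) := by
      rw [hbrk1, h4m, hb₁, ← pow_mul, h4m, hT₁]
    rw [hθ₁def] at hform1
    set θ₁ := (χ - brk b₂ T₂ (8 * k - 4)) / (b₂ ^ (8 * k - 4) * ((1 + b₂ + b₂ ^ 2 + b₂ ^ 3) * T₂)) with hθ₁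
    clear_value θ₁
    have hp1 : b₂ ^ n = b₂ ^ (8 * k - 4) * b₂ := by rw [← pow_succ]; congr 1; omega
    have hlow : Real.pi * (6 + b₂) / (6 * (1 + b₂ + b₂ ^ 2 + b₂ ^ 3)) ≤ θ₁ := by
      rw [hθ₁, le_div_iff₀ hθden]
      have hlb : Real.pi * T₂ * b₂ ^ (8 * k - 4) + Real.pi / 6 * T₂ * (b₂ ^ (8 * k - 4) * b₂)
          ≤ χ - brk b₂ T₂ (8 * k - 4) := by
        rw [← hp1]; linarith
      have heq : Real.pi * (6 + b₂) / (6 * (1 + b₂ + b₂ ^ 2 + b₂ ^ 3))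
            * (b₂ ^ (8 * k - 4) * ((1 + b₂ + b₂ ^ 2 + b₂ ^ 3) * T₂))
          = Real.pi * T₂ * b₂ ^ (8 * k - 4) + Real.pi / 6 * T₂ * (b₂ ^ (8 * k - 4) * b₂) := by
        field_simp
      linarith
    have hupp : θ₁ ≤ Real.pi - Real.pi * (6 + b₂) / (6 * (1 + b₂ + b₂ ^ 2 + b₂ ^ 3)) := by
      rw [hθ₁, div_le_iff₀ hθden]
      have hub : χ - brk b₂ T₂ (8 * k - 4)
          ≤ Real.pi * T₂ * b₂ ^ (8 * k - 4) + Real.pi * T₂ * (b₂ ^ (8 * k - 4) * b₂)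
            - Real.pi / 6 * T₂ * (b₂ ^ (8 * k - 4) * b₂) := by
        rw [← hp1]; linarith
      have heq : (Real.pi - Real.pi * (6 + b₂) / (6 * (1 + b₂ + b₂ ^ 2 + b₂ ^ 3)))
            * (b₂ ^ (8 * k - 4) * ((1 + b₂ + b₂ ^ 2 + b₂ ^ 3) * T₂))
          = Real.pi * T₂ * b₂ ^ (8 * k - 4) * (1 + b₂ + b₂ ^ 2 + b₂ ^ 3)
            - (Real.pi * T₂ * b₂ ^ (8 * k - 4) + Real.pi / 6 * T₂ * (b₂ ^ (8 * k - 4) * b₂)) := by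
        field_simp
      have hfin : Real.pi * T₂ * b₂ ^ (8 * k - 4) + Real.pi * T₂ * (b₂ ^ (8 * k - 4) * b₂)
            - Real.pi / 6 * T₂ * (b₂ ^ (8 * k - 4) * b₂)
          ≤ Real.pi * T₂ * b₂ ^ (8 * k - 4) * (1 + b₂ + b₂ ^ 2 + b₂ ^ 3)
            - (Real.pi * T₂ * b₂ ^ (8 * k - 4) + Real.pi / 6 * T₂ * (b₂ ^ (8 * k - 4) * b₂)) := by
        have hq : (0:ℝ) < Real.pi * T₂ * b₂ ^ (8 * k - 4) := by positivity
        nlinarith [sq_nonneg b₂, pow_pos hb₂0 2, pow_pos hb₂0 3]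
      linarith
    have ht0 : (0:ℝ) ≤ Real.pi * (6 + b₂) / (6 * (1 + b₂ + b₂ ^ 2 + b₂ ^ 3)) :=
      le_of_lt (div_pos (by nlinarith) (by nlinarith))
    have hsin1 : 1 / (2 * b₂ ^ 2) ≤ Real.sin θ₁ :=
      le_trans (key_ineq hb₂) (sin_ge_left ht0 hlow hupp)
    rw [hform1]
    have hpow2 : b₂ ^ (8 * k - 1) = b₂ ^ n * b₂ ^ 2 := by rw [← pow_add]; congr 1; omega
    have hA : (0:ℝ) < a₂ * T₂ * b₂ ^ (8 * k - 1) := by positivity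
    have hmul := mul_le_mul_of_nonneg_left hsin1 hA.le
    have hval : a₂ * T₂ * b₂ ^ (8 * k - 1) * (1 / (2 * b₂ ^ 2)) = 1 / 2 * (a₂ * T₂ * b₂ ^ n) := by
      rw [hpow2]
      field_simp
    calc -1 * a₁ * (b₁ ^ m * T₁) * Real.sin θ₁
        = -(a₁ * (b₁ ^ m * T₁) * Real.sin θ₁) := by ring
      _ = -(a₂ * T₂ * b₂ ^ (8 * k - 1) * Real.sin θ₁) := by rw [hamp]
      _ ≤ -(1 / 2 * (a₂ * T₂ * b₂ ^ n)) := by rw [← hval]; linarith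
      _ = -(1 / 2) * (a₂ * T₂ * b₂ ^ n) := by ring
  · -- system 2
    have hmem2 : χ ∈ Set.Icc (brk b₂ T₂ n) (brk b₂ T₂ (n + 1)) := ⟨by linarith, by linarith⟩
    have hform2 := satG_formula (a := a₂) hb₂ hT₂ n hmem2
    have hodd_n : Odd n := ⟨4 * k - 2, by omega⟩
    rw [hodd_n.neg_one_pow] at hform2
    set θ := (χ - brk b₂ T₂ n) / (b₂ ^ n * T₂) with hθ
    clear_value θ
    have hden : (0:ℝ) < b₂ ^ n * T₂ := by positivity
    have hθl : Real.pi / 6 ≤ θ := by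
      rw [hθ, le_div_iff₀ hden]
      nlinarith [hχl]
    have hθr : θ ≤ Real.pi - Real.pi / 6 := by
      rw [hθ, div_le_iff₀ hden]
      nlinarith [hχr, hlen]
    have hsin2 : (1:ℝ) / 2 ≤ Real.sin θ := by
      have := sin_ge_left (by positivity) hθl hθr
      rwa [Real.sin_pi_div_six] at this
    rw [hform2]
    have hA : (0:ℝ) < a₂ * (b₂ ^ n * T₂) := by positivity
    have hmul := mul_le_mul_of_nonneg_left hsin2 hA.le
    calc -1 * a₂ * (b₂ ^ n * T₂) * Real.sin θ
        = -(a₂ * (b₂ ^ n * T₂) * Real.sin θ) := by ring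
      _ ≤ -(a₂ * (b₂ ^ n * T₂) * (1 / 2)) := by linarith
      _ = -(1 / 2) * (a₂ * T₂ * b₂ ^ n) := by ring
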